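/- Let X₁, …, X_T be measurable spaces and let p and q be probability measures on the product ∏_{t=1}^T X_t obtained by sequential composition of Markov kernels: p has initial law μ₁ and step-t transition kernels κ_t(x_{<t}, ·), and q has initial law ν₁ and step-t transition kernels λ_t(x_{<t}, ·). Define ε₁ := TV(μ₁, ν₁) and, for t ≥ 2, ε_t := E_{x_{<t} ∼ p}[ TV(κ_t(x_{<t}, ·), λ_t(x_{<t}, ·)) ], the expected per-step total-variation deviation under the true prefix law. Then TV(p, q) ≤ Σ_{t=1}^T ε_t. -/

import Mathlib

open MeasureTheory ProbabilityTheory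

noncomputable def tvDist {X : Type*} [MeasurableSpace X] (μ ν : Measure X) : ℝ :=
  ⨆ s : { s : Set X // MeasurableSet s }, |(μ s.1).toReal - (ν s.1).toReal|

section helpers

variable {α : Type*} [MeasurableSpace α]

lemma meas_toReal_le_one (m : Measure α) [IsProbabilityMeasure m] (s : Set α) :
    (m s).toReal ≤ 1 := by
  have h : m s ≤ (1 : ENNReal) := prob_le_one
  calc (m s).toReal ≤ (1 : ENNReal).toReal := ENNReal.toReal_mono (by simp) h
    _ = 1 := by simp

lemma tv_bdd (μ ν : Measure α) [IsProbabilityMeasure μ] [IsProbabilityMeasure ν] :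
    ∀ s : { s : Set α // MeasurableSet s }, |(μ s.1).toReal - (ν s.1).toReal| ≤ 1 := by
  intro s
  rw [abs_sub_le_iff]
  constructor <;> ·
    have h1 : (μ s.1).toReal ≤ 1 := meas_toReal_le_one μ s.1
    have h2 : (ν s.1).toReal ≤ 1 := meas_toReal_le_one ν s.1
    have := ENNReal.toReal_nonneg (a := μ s.1)
    have := ENNReal.toReal_nonneg (a := ν s.1)
    linarith

lemma tvDist_bddAbove (μ ν : Measure α) [IsProbabilityMeasure μ] [IsProbabilityMeasure ν] :
    BddAbove (Set.range fun s : { s : Set α // MeasurableSet s } =>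
      |(μ s.1).toReal - (ν s.1).toReal|) :=
  ⟨1, by rintro x ⟨s, rfl⟩; exact tv_bdd μ ν s⟩

lemma abs_le_tvDist (μ ν : Measure α) [IsProbabilityMeasure μ] [IsProbabilityMeasure ν]
    {s : Set α} (hs : MeasurableSet s) : |(μ s).toReal - (ν s).toReal| ≤ tvDist μ ν :=
  le_ciSup (tvDist_bddAbove μ ν) ⟨s, hs⟩

lemma tvDist_nonneg (μ ν : Measure α) [IsProbabilityMeasure μ] [IsProbabilityMeasure ν] :
    0 ≤ tvDist μ ν := by
  have := abs_le_tvDist μ ν MeasurableSet.empty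
  simpa using this.trans' (abs_nonneg _)

lemma tvDist_le_one (μ ν : Measure α) [IsProbabilityMeasure μ] [IsProbabilityMeasure ν] :
    tvDist μ ν ≤ 1 :=
  ciSup_le (tv_bdd μ ν)

lemma tvDist_map_le {β : Type*} [MeasurableSpace β] (μ ν : Measure α)
    [IsProbabilityMeasure μ] [IsProbabilityMeasure ν] {e : α → β} (he : Measurable e) :
    tvDist (μ.map e) (ν.map e) ≤ tvDist μ ν := by
  have : IsProbabilityMeasure (μ.map e) := Measure.isProbabilityMeasure_map he.aemeasurable
  have : IsProbabilityMeasure (ν.map e) := Measure.isProbabilityMeasure_map he.aemeasurable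
  refine ciSup_le fun s => ?_
  rw [Measure.map_apply he s.2, Measure.map_apply he s.2]
  exact abs_le_tvDist μ ν (he s.2)

lemma integral_sub_le_tvDist (μ ν : Measure α) [IsProbabilityMeasure μ] [IsProbabilityMeasure ν]
    {f : α → ℝ} (hf : Measurable f) (h0 : ∀ x, 0 ≤ f x) (h1 : ∀ x, f x ≤ 1) :
    |∫ x, f x ∂μ - ∫ x, f x ∂ν| ≤ tvDist μ ν := by
  have hint : ∀ (m : Measure α) [IsProbabilityMeasure m], Integrable f m := by
    intro m _
    exact (integrable_const (1 : ℝ)).mono' hf.aestronglyMeasurable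
      (Filter.Eventually.of_forall fun x => by
        rw [Real.norm_eq_abs, abs_of_nonneg (h0 x)]; exact h1 x)
  rw [(hint μ).integral_eq_integral_Ioc_meas_le (Filter.Eventually.of_forall h0)
        (Filter.Eventually.of_forall h1),
      (hint ν).integral_eq_integral_Ioc_meas_le (Filter.Eventually.of_forall h0)
        (Filter.Eventually.of_forall h1)]
  have hmble : ∀ (m : Measure α), Measurable fun t : ℝ => (m {a | t ≤ f a}).toReal := by
    intro m
    have hanti : Antitone (fun t : ℝ => m {a | t ≤ f a}) :=
      fun _ _ hst => measure_mono fun _ h => hst.trans h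
    exact hanti.measurable.ennreal_toReal
  have hintt : ∀ (m : Measure α) [IsProbabilityMeasure m],
      Integrable (fun t : ℝ => (m {a | t ≤ f a}).toReal) (volume.restrict (Set.Ioc 0 1)) := by
    intro m _
    refine (integrable_const (1 : ℝ)).mono' (hmble m).aestronglyMeasurable
      (Filter.Eventually.of_forall fun t => ?_)
    rw [Real.norm_eq_abs, abs_of_nonneg ENNReal.toReal_nonneg]
    exact meas_toReal_le_one m _
  haveI : IsFiniteMeasure (volume.restrict (Set.Ioc (0:ℝ) 1)) :=
    ⟨by rw [Measure.restrict_apply_univ]; simp⟩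
  simp only [measureReal_def]
  rw [← integral_sub (hintt μ) (hintt ν)]
  have key := norm_integral_le_of_norm_le_const (μ := volume.restrict (Set.Ioc (0:ℝ) 1))
    (f := fun t : ℝ => (μ {a | t ≤ f a}).toReal - (ν {a | t ≤ f a}).toReal)
    (C := tvDist μ ν)
    (Filter.Eventually.of_forall fun t => by
      rw [Real.norm_eq_abs]
      exact abs_le_tvDist μ ν (hf measurableSet_Ici))
  rw [measureReal_def, Measure.restrict_apply_univ] at key
  simpa using key

end helpers

noncomputable def seqLaw (X : ℕ → Type*) [∀ n, MeasurableSpace (X n)]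
    (μ : Measure (X 0)) (κ : (t : ℕ) → Kernel (∀ i : Fin (t + 1), X i) (X (t + 1))) :
    (n : ℕ) → Measure (∀ i : Fin (n + 1), X i)
  | 0 => μ.map (fun x => Fin.cons x (fun i : Fin 0 => i.elim0))
  | n + 1 => (seqLaw X μ κ n).bind (fun x => ((κ n) x).map (fun y => Fin.snoc x y))

section seq

variable (X : ℕ → Type*) [∀ n, MeasurableSpace (X n)]

lemma measurable_cons0 : Measurable (fun x : X 0 =>
    (Fin.cons x (fun i : Fin 0 => i.elim0) : ∀ i : Fin 1, X i)) := by
  apply measurable_pi_lambda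
  intro i
  have hi : i = 0 := Fin.eq_zero i
  subst hi
  simp only [Fin.cons_zero]; exact measurable_id

lemma measurable_snoc_pair (n : ℕ) :
    Measurable (fun p : (∀ i : Fin (n + 1), X i) × X (n + 1) =>
      (Fin.snoc p.1 p.2 : ∀ i : Fin (n + 2), X i)) := by
  apply measurable_pi_lambda
  intro i
  refine Fin.lastCases ?_ ?_ i
  · simpa [Fin.snoc_last] using measurable_snd
  · intro j
    simp only [Fin.snoc_castSucc]; exact (measurable_pi_apply j).comp measurable_fst

lemma measurable_snoc_fixed (n : ℕ) (x : ∀ i : Fin (n + 1), X i) :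
    Measurable (fun y : X (n + 1) => (Fin.snoc x y : ∀ i : Fin (n + 2), X i)) :=
  (measurable_snoc_pair X n).comp (measurable_const.prodMk measurable_id)

noncomputable def snocKernel (n : ℕ) (κ : Kernel (∀ i : Fin (n + 1), X i) (X (n + 1)))
    [IsSFiniteKernel κ] : Kernel (∀ i : Fin (n + 1), X i) (∀ i : Fin (n + 2), X i) :=
  (Kernel.id ×ₖ κ).map (fun p => Fin.snoc p.1 p.2)

lemma snocKernel_apply (n : ℕ) (κ : Kernel (∀ i : Fin (n + 1), X i) (X (n + 1)))
    [IsSFiniteKernel κ] (x : ∀ i : Fin (n + 1), X i) :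
    snocKernel X n κ x = (κ x).map (fun y => Fin.snoc x y) := by
  rw [snocKernel, Kernel.map_apply _ (measurable_snoc_pair X n), Kernel.prod_apply,
    Kernel.id_apply, Measure.dirac_prod,
    Measure.map_map (measurable_snoc_pair X n) measurable_prodMk_left]
  rfl

instance snocKernel_markov (n : ℕ) (κ : Kernel (∀ i : Fin (n + 1), X i) (X (n + 1)))
    [IsMarkovKernel κ] : IsMarkovKernel (snocKernel X n κ) :=
  Kernel.IsMarkovKernel.map _ (measurable_snoc_pair X n)

lemma bind_eq_bind_snocKernel (n : ℕ) (p : Measure (∀ i : Fin (n + 1), X i))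
    (κ : Kernel (∀ i : Fin (n + 1), X i) (X (n + 1))) [IsSFiniteKernel κ] :
    (p.bind fun x => (κ x).map (fun y => Fin.snoc x y)) = p.bind (snocKernel X n κ) := by
  congr 1
  funext x
  rw [snocKernel_apply]

instance seqLaw_prob (μ : Measure (X 0)) [IsProbabilityMeasure μ]
    (κ : (t : ℕ) → Kernel (∀ i : Fin (t + 1), X i) (X (t + 1))) [∀ t, IsMarkovKernel (κ t)]
    (n : ℕ) : IsProbabilityMeasure (seqLaw X μ κ n) := by
  induction n with
  | zero => exact Measure.isProbabilityMeasure_map (measurable_cons0 X).aemeasurable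
  | succ n ih =>
    rw [seqLaw, bind_eq_bind_snocKernel]
    constructor
    rw [Measure.bind_apply MeasurableSet.univ (snocKernel X n (κ n)).measurable.aemeasurable]
    simp

end seq

section step

variable (X : ℕ → Type*) [∀ n, MeasurableSpace (X n)]

lemma step_bound (n : ℕ) (p q : Measure (∀ i : Fin (n + 1), X i))
    [IsProbabilityMeasure p] [IsProbabilityMeasure q]
    (κ lam : Kernel (∀ i : Fin (n + 1), X i) (X (n + 1)))
    [IsMarkovKernel κ] [IsMarkovKernel lam]
    (hm : Measurable fun x => tvDist (κ x) (lam x)) :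
    tvDist (p.bind fun x => (κ x).map (fun y => (Fin.snoc x y : ∀ i : Fin (n + 2), X i)))
           (q.bind fun x => (lam x).map (fun y => (Fin.snoc x y : ∀ i : Fin (n + 2), X i))) ≤
      tvDist p q + ∫ x, tvDist (κ x) (lam x) ∂p := by
  rw [bind_eq_bind_snocKernel, bind_eq_bind_snocKernel]
  set η := snocKernel X n κ with hη
  set θ := snocKernel X n lam with hθ
  refine ciSup_le fun s => ?_
  set f : (∀ i : Fin (n + 1), X i) → ℝ := fun x => (η x s.1).toReal with hfdef
  set g : (∀ i : Fin (n + 1), X i) → ℝ := fun x => (θ x s.1).toReal with hgdef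
  have hfm : Measurable f := (η.measurable_coe s.2).ennreal_toReal
  have hgm : Measurable g := (θ.measurable_coe s.2).ennreal_toReal
  have hf0 : ∀ x, 0 ≤ f x := fun x => ENNReal.toReal_nonneg
  have hg0 : ∀ x, 0 ≤ g x := fun x => ENNReal.toReal_nonneg
  have hf1 : ∀ x, f x ≤ 1 := fun x => meas_toReal_le_one (η x) s.1
  have hg1 : ∀ x, g x ≤ 1 := fun x => meas_toReal_le_one (θ x) s.1
  have hint : ∀ {h : (∀ i : Fin (n + 1), X i) → ℝ}, Measurable h → (∀ x, 0 ≤ h x) →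
      (∀ x, h x ≤ 1) → Integrable h p := by
    intro h hhm hh0 hh1
    exact (integrable_const (1 : ℝ)).mono' hhm.aestronglyMeasurable
      (Filter.Eventually.of_forall fun x => by
        rw [Real.norm_eq_abs, abs_of_nonneg (hh0 x)]; exact hh1 x)
  have hP : ((p.bind ⇑η) s.1).toReal = ∫ x, f x ∂p := by
    rw [Measure.bind_apply s.2 η.measurable.aemeasurable,
      ← integral_toReal (η.measurable_coe s.2).aemeasurable
        (Filter.Eventually.of_forall fun x => measure_lt_top _ _)]
  have hQ : ((q.bind ⇑θ) s.1).toReal = ∫ x, g x ∂q := by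
    rw [Measure.bind_apply s.2 θ.measurable.aemeasurable,
      ← integral_toReal (θ.measurable_coe s.2).aemeasurable
        (Filter.Eventually.of_forall fun x => measure_lt_top _ _)]
  rw [hP, hQ]
  have hpoint : ∀ x, |f x - g x| ≤ tvDist (κ x) (lam x) := by
    intro x
    have hsect : MeasurableSet ((fun y : X (n + 1) => (Fin.snoc x y : ∀ i : Fin (n + 2), X i))
        ⁻¹' s.1) := measurable_snoc_fixed X n x s.2
    have h1 : η x s.1 = κ x ((fun y => Fin.snoc x y) ⁻¹' s.1) := by
      rw [hη, snocKernel_apply]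
      exact Measure.map_apply (measurable_snoc_fixed X n x) s.2
    have h2 : θ x s.1 = lam x ((fun y => Fin.snoc x y) ⁻¹' s.1) := by
      rw [hθ, snocKernel_apply]
      exact Measure.map_apply (measurable_snoc_fixed X n x) s.2
    rw [hfdef, hgdef]
    simp only [h1, h2]
    exact abs_le_tvDist (κ x) (lam x) hsect
  calc |(∫ x, f x ∂p) - ∫ x, g x ∂q|
      ≤ |(∫ x, f x ∂p) - ∫ x, g x ∂p| + |(∫ x, g x ∂p) - ∫ x, g x ∂q| :=
        abs_sub_le _ _ _
    _ ≤ (∫ x, tvDist (κ x) (lam x) ∂p) + tvDist p q := by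
        gcongr
        · calc |(∫ x, f x ∂p) - ∫ x, g x ∂p|
              = |∫ x, (f x - g x) ∂p| := by
                rw [integral_sub (hint hfm hf0 hf1) (hint hgm hg0 hg1)]
            _ ≤ ∫ x, |f x - g x| ∂p := by
                simpa [Real.norm_eq_abs] using
                  norm_integral_le_integral_norm (μ := p) (f := fun x => f x - g x)
            _ ≤ ∫ x, tvDist (κ x) (lam x) ∂p := by
                refine integral_mono ((hint hfm hf0 hf1).sub (hint hgm hg0 hg1)).abs
                  (hint hm (fun x => tvDist_nonneg _ _) (fun x => tvDist_le_one _ _)) hpoint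
        · exact integral_sub_le_tvDist p q hgm hg0 hg1
    _ = tvDist p q + ∫ x, tvDist (κ x) (lam x) ∂p := add_comm _ _

end step

/-- **Accumulation of local deviations (expectation / teacher-forcing version).** For
sequential laws `p = seqLaw μ κ` and `q = seqLaw ν lam` on `T = n + 1` coordinates,
`TV(p, q) ≤ TV(μ, ν) + ∑_{t<n} E_{x ∼ p-prefix}[ TV(κ t x, lam t x) ]`, where the `t`-th
expectation is taken under the prefix law `seqLaw X μ κ t` of the true sequential law `p`. -/
theorem tv_accumulation_expectation (X : ℕ → Type*) [∀ n, MeasurableSpace (X n)] (n : ℕ)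
    (μ ν : Measure (X 0)) [IsProbabilityMeasure μ] [IsProbabilityMeasure ν]
    (κ lam : (t : ℕ) → Kernel (∀ i : Fin (t + 1), X i) (X (t + 1)))
    [∀ t, IsMarkovKernel (κ t)] [∀ t, IsMarkovKernel (lam t)]
    (hmeas : ∀ t < n, Measurable fun x => tvDist ((κ t) x) ((lam t) x)) :
    tvDist (seqLaw X μ κ n) (seqLaw X ν lam n) ≤
      tvDist μ ν +
        ∑ t ∈ Finset.range n, ∫ x, tvDist ((κ t) x) ((lam t) x) ∂seqLaw X μ κ t := by
  induction n with
  | zero =>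
    simpa [seqLaw] using tvDist_map_le μ ν (measurable_cons0 X)
  | succ n ih =>
    rw [Finset.sum_range_succ, ← add_assoc]
    have hstep := step_bound X n (seqLaw X μ κ n) (seqLaw X ν lam n) (κ n) (lam n)
      (hmeas n (Nat.lt_succ_self n))
    refine le_trans ?_ (add_le_add_left
      (ih fun t ht => hmeas t (ht.trans (Nat.lt_succ_self n))) _)
    exact hstep
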